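/- arXiv:2207.04408 — 6 statements merged into one kernel-verified Lean document; each statement's English description precedes it below -/
import Mathlib

section
/- Fix d ≥ 4, 2 ≤ m ≤ 2d−1, and integers n₂,…,n_m all ≥ 2. Let p(X) = (X² − (d−1)X − 1)·∏_{i=2}^{m}(X^{n_i}+1) + X·∑_{i=2}^{m} ∏_{j≠i, 2≤j≤m}(X^{n_j}+1). Then p(2) < 0; consequently, since p is monic, p has a real root strictly larger than 2. -/
/-- The auxiliary polynomial `p_{d,n̲}` of the paper, evaluated at a real `x`:
`p(x) = (x² − (d−1)x − 1)·∏_{i=2}^{m}(x^{n_i}+1) + x·∑_{i=2}^{m}∏_{j≠i}(x^{n_j}+1)`. -/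
def pPoly (d m : ℕ) (n : ℕ → ℕ) (x : ℝ) : ℝ :=
  (x^2 - ((d : ℝ) - 1) * x - 1) * ∏ i ∈ Finset.Icc 2 m, (x^(n i) + 1)
    + x * ∑ i ∈ Finset.Icc 2 m, ∏ j ∈ (Finset.Icc 2 m).erase i, (x^(n j) + 1)

/-- For `d ≥ 4`, `2 ≤ m ≤ 2d−1` and `n₂,…,n_m ≥ 2`, one has `p(2) < 0`, and
consequently `p` has a real root strictly larger than `2`. -/
theorem stmt1 (d m : ℕ) (hd : 4 ≤ d) (hm1 : 2 ≤ m) (hm2 : m ≤ 2*d - 1)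
    (n : ℕ → ℕ) (hn : ∀ i ∈ Finset.Icc 2 m, 2 ≤ n i) :
    pPoly d m n 2 < 0 ∧ ∃ x : ℝ, 2 < x ∧ pPoly d m n x = 0 := by
  have hdr : (4:ℝ) ≤ (d:ℝ) := by exact_mod_cast hd
  have hmr : (m:ℝ) + 1 ≤ 2 * (d:ℝ) := by
    have : m + 1 ≤ 2 * d := by omega
    exact_mod_cast this
  -- p(2) < 0
  have hP : 0 < ∏ i ∈ Finset.Icc 2 m, ((2:ℝ)^(n i) + 1) :=
    Finset.prod_pos (fun i _ => by positivity)
  have hterm : ∀ i ∈ Finset.Icc 2 m,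
      5 * ∏ j ∈ (Finset.Icc 2 m).erase i, ((2:ℝ)^(n j) + 1)
        ≤ ∏ i ∈ Finset.Icc 2 m, ((2:ℝ)^(n i) + 1) := by
    intro i hi
    have h4 : (4:ℝ) ≤ 2^(n i) := by
      calc (4:ℝ) = 2^2 := by norm_num
        _ ≤ 2^(n i) := pow_le_pow_right₀ (by norm_num) (hn i hi)
    have hprodpos : 0 ≤ ∏ j ∈ (Finset.Icc 2 m).erase i, ((2:ℝ)^(n j) + 1) :=
      Finset.prod_nonneg (fun j _ => by positivity)
    calc 5 * ∏ j ∈ (Finset.Icc 2 m).erase i, ((2:ℝ)^(n j) + 1)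
        ≤ ((2:ℝ)^(n i) + 1) * ∏ j ∈ (Finset.Icc 2 m).erase i, ((2:ℝ)^(n j) + 1) :=
          mul_le_mul_of_nonneg_right (by linarith) hprodpos
      _ = ∏ i ∈ Finset.Icc 2 m, ((2:ℝ)^(n i) + 1) := Finset.mul_prod_erase _ (fun j => (2:ℝ)^(n j) + 1) hi
  have hS : 5 * (∑ i ∈ Finset.Icc 2 m, ∏ j ∈ (Finset.Icc 2 m).erase i, ((2:ℝ)^(n j) + 1))
      ≤ ((m:ℝ) - 1) * ∏ i ∈ Finset.Icc 2 m, ((2:ℝ)^(n i) + 1) := by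
    rw [Finset.mul_sum]
    calc ∑ i ∈ Finset.Icc 2 m, 5 * ∏ j ∈ (Finset.Icc 2 m).erase i, ((2:ℝ)^(n j) + 1)
        ≤ ∑ _i ∈ Finset.Icc 2 m, ∏ i ∈ Finset.Icc 2 m, ((2:ℝ)^(n i) + 1) :=
          Finset.sum_le_sum hterm
      _ = ((m:ℝ) - 1) * ∏ i ∈ Finset.Icc 2 m, ((2:ℝ)^(n i) + 1) := by
          rw [Finset.sum_const, Nat.card_Icc, nsmul_eq_mul]
          congr 1
          have h1 : m + 1 - 2 = m - 1 := by omega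
          rw [h1, Nat.cast_sub (by omega)]
          norm_num
  have hneg : pPoly d m n 2 < 0 := by
    rw [pPoly]
    have h2 : ((m:ℝ) - 1) * ∏ i ∈ Finset.Icc 2 m, ((2:ℝ)^(n i) + 1)
        ≤ (2*(d:ℝ) - 2) * ∏ i ∈ Finset.Icc 2 m, ((2:ℝ)^(n i) + 1) :=
      mul_le_mul_of_nonneg_right (by linarith) hP.le
    have h3 : (21 - 6*(d:ℝ)) * ∏ i ∈ Finset.Icc 2 m, ((2:ℝ)^(n i) + 1)
        ≤ -3 * ∏ i ∈ Finset.Icc 2 m, ((2:ℝ)^(n i) + 1) :=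
      mul_le_mul_of_nonneg_right (by linarith) hP.le
    nlinarith [hS, h2, h3, hP]
  refine ⟨hneg, ?_⟩
  -- p(d) > 0
  have hPd : 0 < ∏ i ∈ Finset.Icc 2 m, ((d:ℝ)^(n i) + 1) :=
    Finset.prod_pos (fun i _ => by positivity)
  have hSd : 0 ≤ ∑ i ∈ Finset.Icc 2 m, ∏ j ∈ (Finset.Icc 2 m).erase i, ((d:ℝ)^(n j) + 1) :=
    Finset.sum_nonneg (fun i _ => Finset.prod_nonneg (fun j _ => by positivity))
  have hposd : 0 < pPoly d m n (d:ℝ) := by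
    rw [pPoly]
    nlinarith [mul_pos (show (0:ℝ) < (d:ℝ) - 1 by linarith) hPd,
      mul_nonneg (show (0:ℝ) ≤ (d:ℝ) by linarith) hSd, hPd]
  have hcont : Continuous (pPoly d m n) := by
    unfold pPoly
    have h1 : Continuous (fun x : ℝ => x^2 - ((d:ℝ) - 1) * x - 1) :=
      ((continuous_pow 2).sub (continuous_const.mul continuous_id)).sub continuous_const
    have h2 : ∀ k : ℕ, Continuous (fun x : ℝ => x^k + 1) :=
      fun k => (continuous_pow k).add continuous_const
    exact (h1.mul (continuous_finset_prod _ (fun i _ => h2 (n i)))).add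
      (continuous_id.mul (continuous_finset_sum _
        (fun i _ => continuous_finset_prod _ (fun j _ => h2 (n j)))))
  have h2d : (2:ℝ) ≤ (d:ℝ) := by linarith
  have hmem : (0:ℝ) ∈ Set.Ioo (pPoly d m n 2) (pPoly d m n (d:ℝ)) := ⟨hneg, hposd⟩
  obtain ⟨x, hx, hfx⟩ := intermediate_value_Ioo h2d hcont.continuousOn hmem
  exact ⟨x, hx.1, hfx⟩
end

section
/- Fix d ≥ 4, 2 ≤ m ≤ 2d−1, and n̲ = (n₂,…,n_m) with each n_i ≥ 2. Let λ_{d,n̲} denote the largest real root of p_{d,n̲}. If n̲_k is obtained from n̲ by increasing the entry n_k by 1, then λ_{d,n̲} < λ_{d,n̲_k}. -/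
lemma pPoly_continuous (d m : ℕ) (n : ℕ → ℕ) : Continuous (pPoly d m n) := by
  unfold pPoly
  fun_prop

lemma pPoly_split (d m k : ℕ) (hk : k ∈ Finset.Icc 2 m) (n : ℕ → ℕ) (x : ℝ) :
    pPoly d m n x =
      (x^(n k) + 1) *
        ((x^2 - ((d:ℝ)-1)*x - 1) * ∏ i ∈ (Finset.Icc 2 m).erase k, (x^(n i)+1)
          + x * ∑ i ∈ (Finset.Icc 2 m).erase k,
              ∏ j ∈ ((Finset.Icc 2 m).erase k).erase i, (x^(n j)+1))
      + x * ∏ i ∈ (Finset.Icc 2 m).erase k, (x^(n i)+1) := by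
  unfold pPoly
  rw [← Finset.mul_prod_erase _ _ hk, ← Finset.add_sum_erase _ _ hk]
  have hsum : ∑ i ∈ (Finset.Icc 2 m).erase k,
      ∏ j ∈ (Finset.Icc 2 m).erase i, (x^(n j)+1)
      = ∑ i ∈ (Finset.Icc 2 m).erase k,
          (x^(n k) + 1) * ∏ j ∈ ((Finset.Icc 2 m).erase k).erase i, (x^(n j)+1) := by
    refine Finset.sum_congr rfl fun i hi => ?_
    obtain ⟨hik, his⟩ := Finset.mem_erase.mp hi
    rw [Finset.erase_right_comm]
    exact (Finset.mul_prod_erase _ _ (Finset.mem_erase.mpr ⟨Ne.symm hik, hk⟩)).symm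
  rw [hsum, ← Finset.mul_sum]
  ring

lemma pPoly_pos (d m : ℕ) (hd : 4 ≤ d) (n : ℕ → ℕ) (x : ℝ) (hx : (d:ℝ) ≤ x) :
    0 < pPoly d m n x := by
  have hd' : (4:ℝ) ≤ d := by exact_mod_cast hd
  have hx0 : 0 < x := by linarith
  have hq : 0 < x^2 - ((d:ℝ)-1)*x - 1 := by
    nlinarith [mul_nonneg hx0.le (sub_nonneg.mpr hx)]
  have hprod : 0 < ∏ i ∈ Finset.Icc 2 m, (x^(n i)+1) :=
    Finset.prod_pos fun i _ => by positivity
  have hsum : 0 ≤ ∑ i ∈ Finset.Icc 2 m, ∏ j ∈ (Finset.Icc 2 m).erase i, (x^(n j)+1) :=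
    Finset.sum_nonneg fun i _ => Finset.prod_nonneg fun j _ => by positivity
  unfold pPoly
  have := mul_pos hq hprod
  nlinarith [mul_nonneg hx0.le hsum]

lemma pPoly_neg2 (d m : ℕ) (hd : 4 ≤ d) (hm1 : 2 ≤ m) (hm2 : m ≤ 2*d - 1)
    (n : ℕ → ℕ) (hn : ∀ i ∈ Finset.Icc 2 m, 2 ≤ n i) :
    pPoly d m n 2 < 0 := by
  set s := Finset.Icc 2 m with hs
  set P := ∏ i ∈ s, ((2:ℝ)^(n i)+1) with hP
  have hf : ∀ i ∈ s, (5:ℝ) ≤ 2^(n i)+1 := by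
    intro i hi
    have h4 : (2:ℝ)^2 ≤ 2^(n i) := pow_le_pow_right₀ one_le_two (hn i hi)
    norm_num at h4 ⊢
    linarith
  have hfpos : ∀ i ∈ s, (0:ℝ) < 2^(n i)+1 := fun i hi => by positivity
  have hPpos : 0 < P := Finset.prod_pos hfpos
  have hterm : ∀ i ∈ s, ∏ j ∈ s.erase i, ((2:ℝ)^(n j)+1) ≤ P / 5 := by
    intro i hi
    have heq : ((2:ℝ)^(n i)+1) * ∏ j ∈ s.erase i, ((2:ℝ)^(n j)+1) = P := by
      rw [hP]; exact Finset.mul_prod_erase s (fun j => (2:ℝ)^(n j)+1) hi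
    have hpe : 0 < ∏ j ∈ s.erase i, ((2:ℝ)^(n j)+1) :=
      Finset.prod_pos fun j hj => hfpos j (Finset.mem_of_mem_erase hj)
    have h5 : (5:ℝ) * ∏ j ∈ s.erase i, ((2:ℝ)^(n j)+1)
        ≤ ((2:ℝ)^(n i)+1) * ∏ j ∈ s.erase i, ((2:ℝ)^(n j)+1) :=
      mul_le_mul_of_nonneg_right (hf i hi) hpe.le
    rw [heq] at h5
    linarith
  have hcard : (s.card : ℝ) = (m:ℝ) - 1 := by
    rw [hs, Nat.card_Icc]
    have : m + 1 - 2 = m - 1 := by omega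
    rw [this, Nat.cast_sub (by omega)]
    norm_num
  have hsum : ∑ i ∈ s, ∏ j ∈ s.erase i, ((2:ℝ)^(n j)+1) ≤ ((m:ℝ) - 1) * (P / 5) := by
    calc ∑ i ∈ s, ∏ j ∈ s.erase i, ((2:ℝ)^(n j)+1)
        ≤ s.card • (P/5) := Finset.sum_le_card_nsmul s _ _ hterm
      _ = ((m:ℝ) - 1) * (P/5) := by rw [nsmul_eq_mul, hcard]
  have hmr : (m:ℝ) ≤ 2*(d:ℝ) - 1 := by
    have : (m:ℕ) ≤ 2*d - 1 := hm2
    have h1 : 1 ≤ 2*d := by omega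
    have := (Nat.cast_le (α := ℝ)).mpr hm2
    rw [Nat.cast_sub h1] at this
    push_cast at this ⊢
    linarith
  have hdr : (4:ℝ) ≤ d := by exact_mod_cast hd
  have hquad : ((2:ℝ)^2 - ((d:ℝ)-1)*2 - 1) = 5 - 2*d := by ring
  unfold pPoly
  rw [← hs, ← hP, hquad]
  have hcoef : (5:ℝ) - 2*d ≤ -3 := by linarith
  nlinarith [hPpos, hsum, mul_le_mul_of_nonneg_right hcoef hPpos.le]

lemma update_prod_eq (k m : ℕ) (n : ℕ → ℕ) (v : ℕ) (x : ℝ) (t : Finset ℕ) (hkt : k ∉ t) :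
    ∏ j ∈ t, (x^((Function.update n k v) j)+1) = ∏ j ∈ t, (x^(n j)+1) := by
  refine Finset.prod_congr rfl fun j hj => ?_
  rw [Function.update_of_ne (by rintro rfl; exact hkt hj)]

/-- If `λ_{d,n̲}` is the largest real root of `p_{d,n̲}` and `n̲_k` is obtained from
`n̲` by increasing the entry `n_k` by one, then `λ_{d,n̲} < λ_{d,n̲_k}`. -/
theorem stmt3 (d m k : ℕ) (hd : 4 ≤ d) (hm1 : 2 ≤ m) (hm2 : m ≤ 2*d - 1)
    (hk1 : 2 ≤ k) (hk2 : k ≤ m)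
    (n : ℕ → ℕ) (hn : ∀ i ∈ Finset.Icc 2 m, 2 ≤ n i)
    (lam lam' : ℝ)
    (hlam : IsGreatest {x : ℝ | pPoly d m n x = 0} lam)
    (hlam' : IsGreatest {x : ℝ | pPoly d m (Function.update n k (n k + 1)) x = 0} lam') :
    lam < lam' := by
  have hk : k ∈ Finset.Icc 2 m := Finset.mem_Icc.mpr ⟨hk1, hk2⟩
  set n' := Function.update n k (n k + 1) with hn'
  set s := Finset.Icc 2 m with hs
  -- λ > 2
  have hdr : (4:ℝ) ≤ d := by exact_mod_cast hd
  have h2d : (2:ℝ) ≤ (d:ℝ) := by linarith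
  have hneg2 : pPoly d m n 2 < 0 := pPoly_neg2 d m hd hm1 hm2 n hn
  have hposd : 0 < pPoly d m n d := pPoly_pos d m hd n _ le_rfl
  have hcont : Continuous (pPoly d m n) := pPoly_continuous d m n
  obtain ⟨c, hc, hc0⟩ : ∃ c ∈ Set.Icc (2:ℝ) d, pPoly d m n c = 0 := by
    have := intermediate_value_Icc h2d hcont.continuousOn
    have h0 : (0:ℝ) ∈ Set.Icc (pPoly d m n 2) (pPoly d m n (d:ℝ)) :=
      ⟨hneg2.le, hposd.le⟩
    obtain ⟨c, hc, hceq⟩ := this h0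
    exact ⟨c, hc, hceq⟩
  have hlamc : c ≤ lam := hlam.2 hc0
  have hc2 : 2 < c := lt_of_le_of_ne hc.1 (by rintro rfl; exact hneg2.ne hc0)
  have hlam2 : 2 < lam := lt_of_lt_of_le hc2 hlamc
  have hlamd : lam < (d:ℝ) := by
    by_contra h
    push_neg at h
    exact (pPoly_pos d m hd n lam h).ne' hlam.1
  -- structural identity
  set Q := ∏ i ∈ s.erase k, (lam^(n i)+1) with hQ
  set S := ∑ i ∈ s.erase k, ∏ j ∈ (s.erase k).erase i, (lam^(n j)+1) with hS
  set C := (lam^2 - ((d:ℝ)-1)*lam - 1) * Q + lam * S with hC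
  have hQpos : 0 < Q := Finset.prod_pos fun i _ => by positivity
  have hsplit : pPoly d m n lam = (lam^(n k) + 1) * C + lam * Q :=
    pPoly_split d m k hk n lam
  have hsplit' : pPoly d m n' lam = (lam^(n k + 1) + 1) * C + lam * Q := by
    have h1 := pPoly_split d m k hk n' lam
    have hnk' : n' k = n k + 1 := Function.update_self _ _ _
    have hQ' : ∏ i ∈ s.erase k, (lam^(n' i)+1) = Q :=
      update_prod_eq k m n _ lam _ (Finset.notMem_erase _ _)
    have hS' : ∑ i ∈ s.erase k, ∏ j ∈ (s.erase k).erase i, (lam^(n' j)+1) = S := by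
      refine Finset.sum_congr rfl fun i hi => ?_
      exact update_prod_eq k m n _ lam _
        (fun h => Finset.notMem_erase k s (Finset.mem_of_mem_erase h))
    rw [h1, hnk', hQ', hS']
  -- C(λ) < 0
  have hCneg : C < 0 := by
    have h0 : (lam^(n k) + 1) * C + lam * Q = 0 := by rw [← hsplit]; exact hlam.1
    have hpk : (0:ℝ) < lam^(n k) + 1 := by positivity
    nlinarith [mul_pos (show (0:ℝ) < lam by linarith) hQpos]
  -- p'(λ) < 0
  have hneg' : pPoly d m n' lam < 0 := by
    have h0 : (lam^(n k) + 1) * C + lam * Q = 0 := by rw [← hsplit]; exact hlam.1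
    have hdiff : pPoly d m n' lam = C * (lam^(n k) * (lam - 1)) := by
      rw [hsplit', pow_succ]
      nlinarith [h0]
    rw [hdiff]
    have : (0:ℝ) < lam^(n k) * (lam - 1) :=
      mul_pos (pow_pos (by linarith) _) (by linarith)
    exact mul_neg_of_neg_of_pos hCneg this
  -- p'(d) > 0, IVT
  have hposd' : 0 < pPoly d m n' d := pPoly_pos d m hd n' _ le_rfl
  have hcont' : Continuous (pPoly d m n') := pPoly_continuous d m n'
  obtain ⟨c', hc', hc'0⟩ : ∃ c' ∈ Set.Icc lam (d:ℝ), pPoly d m n' c' = 0 := by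
    have := intermediate_value_Icc hlamd.le hcont'.continuousOn
    have h0 : (0:ℝ) ∈ Set.Icc (pPoly d m n' lam) (pPoly d m n' (d:ℝ)) :=
      ⟨hneg'.le, hposd'.le⟩
    obtain ⟨c', hc', hceq⟩ := this h0
    exact ⟨c', hc', hceq⟩
  have hcl : lam < c' := lt_of_le_of_ne hc'.1 (by rintro rfl; exact hneg'.ne hc'0)
  exact lt_of_lt_of_le hcl (hlam'.2 hc'0)
end

section
/- Fix d ≥ 4, 2 ≤ m < 2d−1, n̲ = (n₂,…,n_{m−1}) with n_i ≥ 2, and any λ with 2 < λ < λ_{d,n̲}. Then there exists N ≥ 2 such that for all n_m ≥ N, p_{d,(n₂,…,n_{m−1},n_m)}(λ) < 0, and hence λ < λ_{d,(n₂,…,n_{m−1},n_m)}. -/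
open Set Finset

/-- Factorized form of `pPoly` for positive `x`. -/
lemma pPoly_eq (d k : ℕ) (n : ℕ → ℕ) (x : ℝ) (hx : 0 < x) :
    pPoly d k n x = (x^2 - ((d:ℝ)-1)*x - 1 + ∑ i ∈ Finset.Icc 2 k, x/(x^(n i)+1)) *
      ∏ i ∈ Finset.Icc 2 k, (x^(n i)+1) := by
  have hf : ∀ i, (0:ℝ) < x^(n i)+1 := fun i => by positivity
  have h1 : ∀ i ∈ Finset.Icc 2 k,
      (∏ j ∈ (Finset.Icc 2 k).erase i, (x^(n j)+1))
        = (∏ j ∈ Finset.Icc 2 k, (x^(n j)+1)) / (x^(n i)+1) := by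
    intro i hi
    rw [eq_div_iff (hf i).ne', Finset.prod_erase_mul _ _ hi]
  rw [pPoly, Finset.sum_congr rfl h1, add_mul, Finset.sum_mul, Finset.mul_sum]
  congr 1
  refine Finset.sum_congr rfl fun i hi => ?_
  ring

lemma prod_pos_aux (k : ℕ) (n : ℕ → ℕ) (x : ℝ) (hx : 0 < x) :
    0 < ∏ i ∈ Finset.Icc 2 k, (x^(n i)+1) :=
  Finset.prod_pos fun i _ => by positivity

lemma pow_ge_aux (n : ℕ) {x : ℝ} (hx : 2 ≤ x) : (n:ℝ) + 1 ≤ x^n := by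
  have h1 : (2:ℝ)^n ≤ x^n := pow_le_pow_left₀ (by norm_num) hx n
  have h2 : (n:ℝ) + 1 ≤ 2^n := by
    have := Nat.lt_two_pow_self (n := n)
    have h : (n + 1 : ℕ) ≤ 2^n := this
    calc (n:ℝ) + 1 = ((n+1 : ℕ) : ℝ) := by push_cast; ring
      _ ≤ ((2^n : ℕ) : ℝ) := by exact_mod_cast h
      _ = 2^n := by push_cast; ring
  linarith

/-- `x ↦ x / (x^n + 1)` is convex on `[2, ∞)` for `n ≥ 2`. -/
lemma phi_convex (n : ℕ) (hn : 2 ≤ n) :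
    ConvexOn ℝ (Set.Ici (2:ℝ)) (fun x => x / (x^n + 1)) := by
  have hint : interior (Set.Ici (2:ℝ)) = Set.Ioi 2 := interior_Ici
  refine convexOn_of_hasDerivWithinAt2_nonneg (f' := fun x =>
      (1*(x^n+1) - x*((n:ℝ)*x^(n-1))) / ((x^n+1)^2))
    (f'' := fun x =>
      ((-(((n:ℝ)-1)*((n:ℝ)*x^(n-1)))) * ((x^n+1)^2) -
        (1*(x^n+1) - x*((n:ℝ)*x^(n-1))) * ((2:ℕ) * (x^n+1)^(2-1) * ((n:ℝ)*x^(n-1)))) / (((x^n+1)^2)^2))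
    (convex_Ici 2) ?_ ?_ ?_ ?_
  · -- continuity
    refine ContinuousOn.div continuousOn_id
      ((continuous_pow n).add continuous_const).continuousOn fun x hx => ?_
    have hx2 : (2:ℝ) ≤ x := hx
    have : (0:ℝ) < x^n + 1 := by positivity
    exact this.ne'
  · -- first derivative
    rw [hint]
    intro x hx
    have hx0 : (0:ℝ) < x := lt_trans two_pos hx
    have hu : (0:ℝ) < x^n + 1 := by positivity
    have hd : HasDerivAt (fun y : ℝ => y^n + 1) ((n:ℝ) * x^(n-1)) x :=
      (hasDerivAt_pow n x).add_const 1
    exact ((hasDerivAt_id x).div hd hu.ne').hasDerivWithinAt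
  · -- second derivative
    rw [hint]
    intro x hx
    have hx0 : (0:ℝ) < x := lt_trans two_pos hx
    have hu : (0:ℝ) < x^n + 1 := by positivity
    have hg : HasDerivAt (fun y : ℝ => 1*(y^n+1) - y*((n:ℝ)*y^(n-1)))
        (-(((n:ℝ)-1)*((n:ℝ)*x^(n-1)))) x := by
      have h2 : HasDerivAt (fun y : ℝ => 1 - ((n:ℝ)-1)*y^n)
          (-(((n:ℝ)-1)*((n:ℝ)*x^(n-1)))) x := by
        have := ((hasDerivAt_pow n x).const_mul ((n:ℝ)-1)).const_sub 1
        convert this using 1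
      have heq : (fun y : ℝ => 1*(y^n+1) - y*((n:ℝ)*y^(n-1)))
          = (fun y : ℝ => 1 - ((n:ℝ)-1)*y^n) := by
        funext y
        have hyy : y^(n-1)*y = y^n := by rw [← pow_succ]; congr 1; omega
        linear_combination (-(n:ℝ)) * hyy
      rw [heq]
      exact h2
    have hh : HasDerivAt (fun y : ℝ => (y^n+1)^2)
        ((2:ℕ) * (x^n+1)^(2-1) * ((n:ℝ)*x^(n-1))) x :=
      ((hasDerivAt_pow n x).add_const 1).pow 2
    exact (hg.div hh (by positivity : ((x^n+1)^2) ≠ 0)).hasDerivWithinAt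
  · -- nonnegativity of second derivative
    rw [hint]
    intro x hx
    have hx0 : (0:ℝ) < x := lt_trans two_pos hx
    have hu : (0:ℝ) < x^n + 1 := by positivity
    have hw : (0:ℝ) < x^(n-1) := pow_pos hx0 _
    have hxn : (n:ℝ) + 1 ≤ x^n := pow_ge_aux n hx.le
    have hc2 : (2:ℝ) ≤ (n:ℝ) := by exact_mod_cast hn
    apply div_nonneg _ (by positivity)
    have hxx : x^(n-1)*x = x^n := by
      rw [← pow_succ]; congr 1; omega
    have hfac : (-(((n:ℝ)-1)*((n:ℝ)*x^(n-1)))) * ((x^n+1)^2) -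
        (1*(x^n+1) - x*((n:ℝ)*x^(n-1))) * ((2:ℕ) * (x^n+1)^(2-1) * ((n:ℝ)*x^(n-1)))
        = (n:ℝ) * x^(n-1) * (x^n+1) * ((((n:ℝ)-1)*x^n) - ((n:ℝ)+1)) := by
      push_cast
      linear_combination (2*(n:ℝ)^2*x^(n-1)*(x^n+1)) * hxx
    rw [hfac]
    have hbr : (0:ℝ) ≤ (((n:ℝ)-1)*x^n) - ((n:ℝ)+1) := by
      have h1 : (0:ℝ) ≤ ((n:ℝ)-2) * x^n :=
        mul_nonneg (by linarith) (pow_pos hx0 n).le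
      nlinarith
    have : (0:ℝ) ≤ (n:ℝ) * x^(n-1) * (x^n+1) := by positivity
    exact mul_nonneg this hbr

lemma quad_convex (c : ℝ) : ConvexOn ℝ (Set.Ici (2:ℝ)) (fun x => x^2 - c*x - 1) := by
  refine ⟨convex_Ici 2, ?_⟩
  intro x hx y hy a b ha hb hab
  simp only [smul_eq_mul]
  nlinarith [mul_nonneg (mul_nonneg ha hb) (sq_nonneg (x - y))]

lemma convexOn_finset_sum {ι : Type*} (t : Finset ι) {s : Set ℝ} (hs : Convex ℝ s)
    (f : ι → ℝ → ℝ) (h : ∀ i ∈ t, ConvexOn ℝ s (f i)) :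
    ConvexOn ℝ s (fun x => ∑ i ∈ t, f i x) := by
  classical
  induction t using Finset.induction_on with
  | empty => simpa using convexOn_const 0 hs
  | insert a t' hnot ih =>
    simp only [Finset.sum_insert hnot]
    exact (h a (Finset.mem_insert_self a t')).add
      (ih fun i hi => h i (Finset.mem_insert_of_mem hi))

/-- Key negativity: if `pPoly` vanishes at `L > lam > 2`, it is negative at `lam`. -/
lemma key_neg (d k : ℕ) (hd : 4 ≤ d) (hcard : (Finset.Icc 2 k).card ≤ 2*d - 4)
    (n : ℕ → ℕ) (hn : ∀ i ∈ Finset.Icc 2 k, 2 ≤ n i)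
    (L lam : ℝ) (hlam : 2 < lam) (hL : lam < L)
    (hroot : pPoly d k n L = 0) : pPoly d k n lam < 0 := by
  set g : ℝ → ℝ := fun x => (x^2 - ((d:ℝ)-1)*x - 1) + ∑ i ∈ Finset.Icc 2 k, x/(x^(n i)+1)
    with hgdef
  have hconv : ConvexOn ℝ (Set.Ici (2:ℝ)) g := by
    refine ConvexOn.add (quad_convex _) (convexOn_finset_sum _ (convex_Ici 2) _ ?_)
    intro i hi
    exact phi_convex (n i) (hn i hi)
  have hd4 : (4:ℝ) ≤ (d:ℝ) := by exact_mod_cast hd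
  have hg2 : g 2 < 0 := by
    have hsum : ∑ i ∈ Finset.Icc 2 k, (2:ℝ)/(2^(n i)+1)
        ≤ (Finset.Icc 2 k).card • (2/5 : ℝ) := by
      refine Finset.sum_le_card_nsmul _ _ _ fun i hi => ?_
      have h4 : (4:ℝ) ≤ 2^(n i) := by
        calc (4:ℝ) = 2^2 := by norm_num
          _ ≤ 2^(n i) := pow_le_pow_right₀ (by norm_num) (hn i hi)
      rw [div_le_div_iff₀ (by positivity) (by norm_num)]
      linarith
    have hcard' : ((Finset.Icc 2 k).card : ℝ) ≤ 2*(d:ℝ) - 4 := by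
      have : ((Finset.Icc 2 k).card : ℝ) ≤ ((2*d - 4 : ℕ) : ℝ) := by exact_mod_cast hcard
      have h48 : (4:ℕ) ≤ 2*d := by omega
      calc ((Finset.Icc 2 k).card : ℝ) ≤ ((2*d - 4 : ℕ) : ℝ) := this
        _ = 2*(d:ℝ) - 4 := by push_cast [h48]; ring
    have hsum' : ∑ i ∈ Finset.Icc 2 k, (2:ℝ)/(2^(n i)+1)
        ≤ ((Finset.Icc 2 k).card : ℝ) * (2/5) := by
      simpa [nsmul_eq_mul] using hsum
    rw [hgdef]
    have h25 : (2:ℝ)^2 - ((d:ℝ)-1)*2 - 1 = 5 - 2*(d:ℝ) := by ring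
    nlinarith
  have hL2 : (2:ℝ) < L := lt_trans hlam hL
  have hgL : g L = 0 := by
    have hP := prod_pos_aux k n L (by linarith)
    have := pPoly_eq d k n L (by linarith)
    rw [hroot] at this
    rcases mul_eq_zero.mp this.symm with h | h
    · exact h
    · exact absurd h hP.ne'
  -- convex combination
  set t : ℝ := (L - lam)/(L - 2) with htdef
  have hLl2 : (0:ℝ) < L - 2 := by linarith
  have ht0 : 0 < t := div_pos (by linarith) hLl2
  have ht1 : t < 1 := by
    rw [htdef, div_lt_one hLl2]; linarith
  have hcomb : t • (2:ℝ) + (1 - t) • L = lam := by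
    simp only [smul_eq_mul, htdef]
    field_simp
    ring
  have hglam : g lam < 0 := by
    have h := hconv.2 (Set.self_mem_Ici (a := (2:ℝ))) (Set.mem_Ici.mpr hL2.le)
      ht0.le (by linarith : (0:ℝ) ≤ 1 - t) (by ring)
    rw [hcomb] at h
    have : t * g 2 + (1 - t) * g L < 0 := by
      rw [hgL]; nlinarith
    simpa only [smul_eq_mul] using lt_of_le_of_lt h this
  have hP := prod_pos_aux k n lam (by linarith)
  rw [pPoly_eq d k n lam (by linarith)]
  exact mul_neg_of_neg_of_pos hglam hP

/-- Recursion for `pPoly` when a new index is added. -/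
lemma pPoly_update (d m : ℕ) (hm : 2 ≤ m) (n : ℕ → ℕ) (nm : ℕ) (x : ℝ) (hx : 0 < x) :
    pPoly d m (Function.update n m nm) x =
      (x^nm+1) * pPoly d (m-1) n x + x * ∏ i ∈ Finset.Icc 2 (m-1), (x^(n i)+1) := by
  have hmem : m ∉ Finset.Icc 2 (m-1) := by simp only [Finset.mem_Icc]; omega
  have hins : Finset.Icc 2 m = insert m (Finset.Icc 2 (m-1)) := by
    have h : m - 1 + 1 = m := by omega
    have h2 := Finset.insert_Icc_right_eq_Icc_add_one (a := 2) (b := m-1) (by omega)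
    rw [h] at h2
    exact h2.symm
  have hupd : ∀ i ∈ Finset.Icc 2 (m-1), Function.update n m nm i = n i := by
    intro i hi
    exact Function.update_of_ne (by simp only [Finset.mem_Icc] at hi; omega) _ _
  have hxnm : (0:ℝ) < x^nm + 1 := by positivity
  rw [pPoly_eq d m _ x hx, pPoly_eq d (m-1) n x hx, hins,
    Finset.sum_insert hmem, Finset.prod_insert hmem, Function.update_self]
  rw [Finset.sum_congr rfl fun i hi => by rw [hupd i hi],
    Finset.prod_congr rfl fun i hi => by rw [hupd i hi]]
  field_simp
  ring

/-- For any `2 < λ < λ_{d,n̲}` there exists `N ≥ 2` such that for all `n_m ≥ N` one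
has `p_{d,(n₂,…,n_{m−1},n_m)}(λ) < 0`, hence `λ < λ_{d,(n₂,…,n_{m−1},n_m)}`. -/
theorem stmt6 (d m : ℕ) (hd : 4 ≤ d) (hm1 : 2 ≤ m) (hm2 : m < 2*d - 1)
    (n : ℕ → ℕ) (hn : ∀ i ∈ Finset.Icc 2 (m-1), 2 ≤ n i)
    (lamInf : ℝ) (hlamInf : IsGreatest {x : ℝ | pPoly d (m-1) n x = 0} lamInf)
    (lamSeq : ℕ → ℝ)
    (hlamSeq : ∀ N, 2 ≤ N →
      IsGreatest {x : ℝ | pPoly d m (Function.update n m N) x = 0} (lamSeq N))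
    (lam : ℝ) (hlam1 : 2 < lam) (hlam2 : lam < lamInf) :
    ∃ N : ℕ, 2 ≤ N ∧ ∀ nm, N ≤ nm →
      pPoly d m (Function.update n m nm) lam < 0 ∧ lam < lamSeq nm := by
  have hlam0 : (0:ℝ) < lam := by linarith
  have hcard : (Finset.Icc 2 (m-1)).card ≤ 2*d - 4 := by
    rw [Nat.card_Icc]; omega
  have hA : pPoly d (m-1) n lam < 0 :=
    key_neg d (m-1) hd hcard n hn lamInf lam hlam1 hlam2 hlamInf.1
  set A := pPoly d (m-1) n lam with hAdef
  set P := ∏ i ∈ Finset.Icc 2 (m-1), (lam^(n i)+1) with hPdef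
  have hPpos : 0 < P := prod_pos_aux (m-1) n lam hlam0
  obtain ⟨N0, hN0⟩ := pow_unbounded_of_one_lt (lam * P / (-A)) (by linarith : (1:ℝ) < lam)
  refine ⟨max N0 2, le_max_right _ _, fun nm hnm => ?_⟩
  have hnm2 : 2 ≤ nm := le_trans (le_max_right _ _) hnm
  have hneg : pPoly d m (Function.update n m nm) lam < 0 := by
    rw [pPoly_update d m hm1 n nm lam hlam0]
    have h1 : lam * P / (-A) < lam ^ nm :=
      lt_of_lt_of_le hN0 (pow_le_pow_right₀ (by linarith)
        (le_trans (le_max_left _ _) hnm))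
    have hApos : (0:ℝ) < -A := by linarith
    rw [div_lt_iff₀ hApos] at h1
    nlinarith [pow_pos hlam0 nm]
  refine ⟨hneg, ?_⟩
  -- find a point b > lam where the polynomial is positive
  set n' := Function.update n m nm with hn'def
  set b : ℝ := max (lam+1) d with hbdef
  have hlb : lam < b := lt_of_lt_of_le (by linarith) (le_max_left _ _)
  have hb2 : (2:ℝ) < b := by linarith
  have hbd : (d:ℝ) ≤ b := le_max_right _ _
  have hd4 : (4:ℝ) ≤ (d:ℝ) := by exact_mod_cast hd
  have hbpos : 0 < pPoly d m n' b := by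
    rw [pPoly_eq d m n' b (by linarith)]
    apply mul_pos
    · have hsum : (0:ℝ) ≤ ∑ i ∈ Finset.Icc 2 m, b/(b^(n' i)+1) := by
        refine Finset.sum_nonneg fun i _ => ?_
        have : (0:ℝ) < b^(n' i)+1 := by positivity
        positivity
      nlinarith
    · exact prod_pos_aux m n' b (by linarith)
  have hcont : ContinuousOn (pPoly d m n') (Set.Icc lam b) := by
    apply Continuous.continuousOn
    unfold pPoly
    apply Continuous.add
    · exact (by fun_prop : Continuous fun x : ℝ => x^2 - ((d:ℝ)-1)*x - 1).mul
        (continuous_finset_prod _ fun i _ => by fun_prop)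
    · exact continuous_id.mul
        (continuous_finset_sum _ fun i _ => continuous_finset_prod _ fun j _ => by fun_prop)
  have hmem : (0:ℝ) ∈ Set.Ioo (pPoly d m n' lam) (pPoly d m n' b) := ⟨hneg, hbpos⟩
  obtain ⟨r, hr, hr0⟩ := intermediate_value_Ioo hlb.le hcont hmem
  exact lt_of_lt_of_le hr.1 ((hlamSeq nm hnm2).2 hr0)
end

section
/- Fix d ≥ 4 and n̲ = (n₂,…,n_{2d−1}) with all n_i ≥ 2, and let λ > 2 be a root of p_{d,n̲}. Then the vector (λ+1, 1, λ, λ/(λ^{n₂}+1), λ²/(λ^{n₂}+1), …, λ^{n₂}/(λ^{n₂}+1), …, λ^{n_{2d−1}}/(λ^{n_{2d−1}}+1))ᵀ satisfies the three key eigenvector equations: d(λ+1) − (d−1) − ∑_{i=2}^{2d−1} λ/(λ^{n_i}+1) = λ(λ+1); (d−1)(λ+1) − (d−2) − ∑_{i=2}^{2d−1} λ/(λ^{n_i}+1) = λ²; and λ+1 − 1 − λ/(λ^{n_i}+1) = λ·λ^{n_i}/(λ^{n_i}+1) for each i. -/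
/-- If `λ > 2` is a root of `p_{d,n̲}` (with `m = 2d−1`), then the explicit vector of
the paper satisfies the three key eigenvector equations. -/
theorem stmt11 (d : ℕ) (hd : 4 ≤ d) (n : ℕ → ℕ)
    (hn : ∀ i ∈ Finset.Icc 2 (2*d - 1), 2 ≤ n i)
    (lam : ℝ) (hlam : 2 < lam) (hroot : pPoly d (2*d - 1) n lam = 0) :
    ((d : ℝ) * (lam + 1) - ((d : ℝ) - 1)
        - ∑ i ∈ Finset.Icc 2 (2*d - 1), lam / (lam^(n i) + 1) = lam * (lam + 1)) ∧
    (((d : ℝ) - 1) * (lam + 1) - ((d : ℝ) - 2)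
        - ∑ i ∈ Finset.Icc 2 (2*d - 1), lam / (lam^(n i) + 1) = lam^2) ∧
    (∀ i ∈ Finset.Icc 2 (2*d - 1),
      lam + 1 - 1 - lam / (lam^(n i) + 1) = lam * lam^(n i) / (lam^(n i) + 1)) := by
  have hlam0 : (0:ℝ) < lam := lt_trans two_pos hlam
  set s := Finset.Icc 2 (2*d - 1) with hs
  have hPpos : ∀ i, (0:ℝ) < lam ^ (n i) + 1 := fun i => by positivity
  have hPne : ∀ i, lam ^ (n i) + 1 ≠ 0 := fun i => (hPpos i).ne'
  have hprodpos : (0:ℝ) < ∏ i ∈ s, (lam ^ (n i) + 1) :=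
    Finset.prod_pos fun i _ => hPpos i
  have hprodne : (∏ i ∈ s, (lam ^ (n i) + 1)) ≠ 0 := hprodpos.ne'
  -- key: the sum S
  have hS : ∑ i ∈ s, lam / (lam ^ (n i) + 1) = ((d:ℝ) - 1) * lam + 1 - lam ^ 2 := by
    have hmul : (∑ i ∈ s, lam / (lam ^ (n i) + 1)) * ∏ i ∈ s, (lam ^ (n i) + 1)
        = (((d:ℝ) - 1) * lam + 1 - lam ^ 2) * ∏ i ∈ s, (lam ^ (n i) + 1) := by
      have hL : (∑ i ∈ s, lam / (lam ^ (n i) + 1)) * ∏ i ∈ s, (lam ^ (n i) + 1)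
          = lam * ∑ i ∈ s, ∏ j ∈ s.erase i, (lam ^ (n j) + 1) := by
        rw [Finset.sum_mul, Finset.mul_sum]
        refine Finset.sum_congr rfl fun i hi => ?_
        rw [← Finset.mul_prod_erase s _ hi]
        field_simp
      rw [hL]
      have := hroot
      unfold pPoly at this
      rw [← hs] at this
      linarith
    exact mul_right_cancel₀ hprodne hmul
  refine ⟨by rw [hS]; ring, by rw [hS]; ring, fun i _ => ?_⟩
  field_simp
  ring
end

section
/- Fix d ≥ 1, 1 ≤ m ≤ 2d−1 and n̲ = (n₂,…,n_m). The polynomial p_{d,n̲}(X) has at most one root of modulus strictly larger than 1, and such a root, if it exists, is real. -/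
open Polynomial Finset Complex

noncomputable def sigC (x y : ℂ) (nn : ℕ) : ℂ := ∑ k ∈ Finset.range nn, x ^ k * y ^ (nn - 1 - k)

lemma core_false (c : ℝ) (hc : 0 ≤ c) (I : Finset ℕ) (ν : ℕ → ℕ) (a P : ℝ)
    (σ δ : ℕ → ℝ)
    (hP : 1 < P)
    (hδ : ∀ i ∈ I, 0 < δ i)
    (hσ0 : ∀ i ∈ I, ν i = 0 → σ i = 0)
    (hC : 0 < a → ∀ i ∈ I, 1 ≤ ν i → a * (P - 1) * σ i < (P + 1) * (P ^ ν i - 1))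
    (hEq1 : ∑ i ∈ I, (P ^ ν i - 1) / δ i = a * (1 - 1 / P) - 2 * c)
    (hEq2 : ∑ i ∈ I, σ i / δ i = 1 + 1 / P) : False := by
  have hP0 : (0:ℝ) < P := by linarith
  have hP1 : 0 < 1 - 1 / P := by
    have : 1 / P < 1 := by rw [div_lt_one hP0]; linarith
    linarith
  have hPinv : 0 < 1 + 1 / P := by positivity
  have hDnn : ∀ i ∈ I, 0 ≤ (P ^ ν i - 1) / δ i := by
    intro i hi
    have h1 : (1:ℝ) ≤ P ^ ν i := one_le_pow₀ (le_of_lt hP)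
    exact div_nonneg (by linarith) (le_of_lt (hδ i hi))
  have hsumD : 0 ≤ ∑ i ∈ I, (P ^ ν i - 1) / δ i := Finset.sum_nonneg hDnn
  have ha0 : 0 ≤ a := by
    by_contra h
    push_neg at h
    nlinarith [hsumD, hEq1]
  by_cases hall : ∀ i ∈ I, ν i = 0
  · have : ∑ i ∈ I, σ i / δ i = 0 := by
      apply Finset.sum_eq_zero
      intro i hi
      rw [hσ0 i hi (hall i hi), zero_div]
    rw [this] at hEq2; linarith
  · push_neg at hall
    obtain ⟨i₀, hi₀, hν₀⟩ := hall
    have ha : 0 < a := by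
      rcases lt_or_eq_of_le ha0 with h | h
      · exact h
      · exfalso
        have hz0 : ∑ i ∈ I, (P ^ ν i - 1) / δ i = 0 := by
          have h1 : ∑ i ∈ I, (P ^ ν i - 1) / δ i ≤ 0 := by rw [hEq1, ← h]; nlinarith
          linarith
        have hz := (Finset.sum_eq_zero_iff_of_nonneg hDnn).mp hz0 i₀ hi₀
        rcases div_eq_zero_iff.mp hz with h' | h'
        · have : (1:ℝ) < P ^ ν i₀ := one_lt_pow₀ hP (by omega)
          linarith
        · exact absurd h' (ne_of_gt (hδ i₀ hi₀))
    have key : ∑ i ∈ I, (a * (P - 1) * σ i) / δ i < ∑ i ∈ I, ((P + 1) * (P ^ ν i - 1)) / δ i := by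
      apply Finset.sum_lt_sum
      · intro i hi
        rcases Nat.eq_zero_or_pos (ν i) with h | h
        · rw [hσ0 i hi h, h, mul_zero, zero_div, pow_zero, sub_self, mul_zero, zero_div]
        · exact le_of_lt ((div_lt_div_iff_of_pos_right (hδ i hi)).mpr (hC ha i hi h))
      · exact ⟨i₀, hi₀, (div_lt_div_iff_of_pos_right (hδ i₀ hi₀)).mpr (hC ha i₀ hi₀ (by omega))⟩
    have lhs_eq : ∑ i ∈ I, (a * (P - 1) * σ i) / δ i = a * (P - 1) * (1 + 1 / P) := by
      rw [← hEq2, Finset.mul_sum]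
      exact Finset.sum_congr rfl fun i _ => (mul_div_assoc _ _ _)
    have rhs_eq : ∑ i ∈ I, ((P + 1) * (P ^ ν i - 1)) / δ i = (P + 1) * (a * (1 - 1 / P) - 2 * c) := by
      rw [← hEq1, Finset.mul_sum]
      exact Finset.sum_congr rfl fun i _ => (mul_div_assoc _ _ _)
    rw [lhs_eq, rhs_eq] at key
    have hident : (P + 1) * (a * (1 - 1 / P)) = a * (P - 1) * (1 + 1 / P) := by
      field_simp
    nlinarith [key, hident]

lemma keyineq_real (x y : ℝ) (hx : 1 < x) (hy : 1 < y) (nn : ℕ) (hn : 1 ≤ nn) :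
    (x + y) * (x * y - 1) * (∑ k ∈ range nn, x ^ k * y ^ (nn - 1 - k))
      < (x * y + 1) * ((x * y) ^ nn - 1) := by
  have hP : 1 < x * y := by nlinarith
  have pairpos : ∀ k j : ℕ, k ≤ j →
      0 < (x*y + 1) * ((x*y) ^ k + (x*y) ^ j) - (x + y) * (x ^ k * y ^ j + x ^ j * y ^ k) := by
    intro k j hkj
    obtain ⟨t, rfl⟩ := Nat.exists_eq_add_of_le hkj
    have e : (x*y + 1) * ((x*y) ^ k + (x*y) ^ (k + t)) - (x + y) * (x ^ k * y ^ (k+t) + x ^ (k+t) * y ^ k)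
        = x ^ k * y ^ k * ((x * x ^ t - 1) * (y * y ^ t - 1) + (x - x ^ t) * (y - y ^ t)) := by
      simp only [pow_add, mul_pow]; ring
    rw [e]
    have hxk : (0:ℝ) < x ^ k := by positivity
    have hyk : (0:ℝ) < y ^ k := by positivity
    have hxt : (1:ℝ) ≤ x ^ t := one_le_pow₀ (le_of_lt hx)
    have hyt : (1:ℝ) ≤ y ^ t := one_le_pow₀ (le_of_lt hy)
    have hxx : (1:ℝ) < x * x ^ t := lt_of_lt_of_le hx (le_mul_of_one_le_right (by positivity) hxt)
    have hyy : (1:ℝ) < y * y ^ t := lt_of_lt_of_le hy (le_mul_of_one_le_right (by positivity) hyt)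
    have h2 : 0 < (x * x ^ t - 1) * (y * y ^ t - 1) := mul_pos (by linarith) (by linarith)
    have h3 : 0 ≤ (x - x ^ t) * (y - y ^ t) := by
      rcases Nat.eq_zero_or_pos t with h | h
      · subst h; simp only [pow_zero]; nlinarith
      · have h4 : x ≤ x ^ t := le_self_pow₀ (le_of_lt hx) (by omega)
        have h5 : y ≤ y ^ t := le_self_pow₀ (le_of_lt hy) (by omega)
        nlinarith
    have := mul_pos (mul_pos hxk hyk) (by linarith : 0 < (x * x ^ t - 1) * (y * y ^ t - 1) + (x - x ^ t) * (y - y ^ t))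
    linarith
  set P := x * y with hPdef
  have half : ∀ k ∈ range nn,
      0 < (P + 1) * (P ^ k + P ^ (nn - 1 - k)) - (x + y) * (x ^ k * y ^ (nn - 1 - k) + x ^ (nn - 1 - k) * y ^ k) := by
    intro k _
    rcases le_total k (nn - 1 - k) with h | h
    · exact pairpos k _ h
    · have h0 := pairpos _ k h
      have e : (P + 1) * (P ^ k + P ^ (nn - 1 - k)) - (x + y) * (x ^ k * y ^ (nn - 1 - k) + x ^ (nn - 1 - k) * y ^ k)
          = (P + 1) * (P ^ (nn - 1 - k) + P ^ k) - (x + y) * (x ^ (nn - 1 - k) * y ^ k + x ^ k * y ^ (nn - 1 - k)) := by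
        ring
      rw [e]; exact h0
  have hsum : 0 < ∑ k ∈ range nn,
      ((P + 1) * (P ^ k + P ^ (nn - 1 - k)) - (x + y) * (x ^ k * y ^ (nn - 1 - k) + x ^ (nn - 1 - k) * y ^ k)) :=
    Finset.sum_pos half (nonempty_range_iff.mpr (by omega))
  have reflP : ∑ k ∈ range nn, P ^ (nn - 1 - k) = ∑ k ∈ range nn, P ^ k :=
    Finset.sum_range_reflect (fun k => P ^ k) nn
  have reflS : ∑ k ∈ range nn, x ^ (nn - 1 - k) * y ^ k = ∑ k ∈ range nn, x ^ k * y ^ (nn - 1 - k) := by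
    rw [← Finset.sum_range_reflect (fun k => x ^ k * y ^ (nn - 1 - k)) nn]
    apply Finset.sum_congr rfl
    intro k hk
    have hk' : k < nn := mem_range.mp hk
    have : nn - 1 - (nn - 1 - k) = k := by omega
    rw [this]
  have expand : ∑ k ∈ range nn,
      ((P + 1) * (P ^ k + P ^ (nn - 1 - k)) - (x + y) * (x ^ k * y ^ (nn - 1 - k) + x ^ (nn - 1 - k) * y ^ k))
      = 2 * (P + 1) * (∑ k ∈ range nn, P ^ k) - 2 * (x + y) * (∑ k ∈ range nn, x ^ k * y ^ (nn - 1 - k)) := by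
    rw [Finset.sum_sub_distrib, ← Finset.mul_sum, ← Finset.mul_sum, Finset.sum_add_distrib,
      Finset.sum_add_distrib, reflP, reflS]
    ring
  rw [expand] at hsum
  have geo : (∑ k ∈ range nn, P ^ k) * (P - 1) = P ^ nn - 1 := geom_sum_mul P nn
  nlinarith [hsum, geo, hP]

lemma sig_conj_real (z : ℂ) (nn : ℕ) :
    (starRingEnd ℂ) (sigC z ((starRingEnd ℂ) z) nn) = sigC z ((starRingEnd ℂ) z) nn := by
  unfold sigC
  rw [map_sum]
  have e1 : ∀ k ∈ range nn, (starRingEnd ℂ) (z ^ k * ((starRingEnd ℂ) z) ^ (nn - 1 - k))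
      = ((starRingEnd ℂ) z) ^ k * z ^ (nn - 1 - k) := by
    intro k _
    rw [map_mul, map_pow, map_pow, Complex.conj_conj]
  rw [Finset.sum_congr rfl e1]
  rw [← Finset.sum_range_reflect (fun k => z ^ k * ((starRingEnd ℂ) z) ^ (nn - 1 - k)) nn]
  apply Finset.sum_congr rfl
  intro k hk
  have hk' : k < nn := mem_range.mp hk
  have h : nn - 1 - (nn - 1 - k) = k := by omega
  rw [h, mul_comm]

lemma sum_pow_ge (r : ℝ) (hr : 0 < r) (nn : ℕ) :
    (nn : ℝ) * r ^ (nn - 1) ≤ ∑ k ∈ range nn, (r ^ 2) ^ k := by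
  have refl : ∑ k ∈ range nn, (r ^ 2) ^ (nn - 1 - k) = ∑ k ∈ range nn, (r ^ 2) ^ k :=
    Finset.sum_range_reflect _ nn
  have pair : ∀ k ∈ range nn, 2 * r ^ (nn - 1) ≤ (r ^ 2) ^ k + (r ^ 2) ^ (nn - 1 - k) := by
    intro k hk
    have hk' : k < nn := mem_range.mp hk
    have h1 : (r ^ 2) ^ k = (r ^ k) ^ 2 := by ring
    have h2 : (r ^ 2) ^ (nn - 1 - k) = (r ^ (nn - 1 - k)) ^ 2 := by ring
    have h3 : r ^ k * r ^ (nn - 1 - k) = r ^ (nn - 1) := by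
      rw [← pow_add]; congr 1; omega
    have := two_mul_le_add_sq (r ^ k) (r ^ (nn - 1 - k))
    rw [h1, h2]
    nlinarith [this]
  have : ∑ k ∈ range nn, 2 * r ^ (nn - 1) ≤ ∑ k ∈ range nn, ((r ^ 2) ^ k + (r ^ 2) ^ (nn - 1 - k)) :=
    Finset.sum_le_sum pair
  rw [Finset.sum_add_distrib, refl, Finset.sum_const, card_range] at this
  have h4 : (nn : ℝ) * (2 * r ^ (nn - 1)) = nn • (2 * r ^ (nn - 1)) := by simp
  nlinarith [this]

lemma keyineq_conj (z : ℂ) (hz : 1 < ‖z‖) (ha : 0 < 2 * z.re) (nn : ℕ) (hn : 1 ≤ nn) :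
    2 * z.re * (Complex.normSq z - 1) * (sigC z ((starRingEnd ℂ) z) nn).re
      < (Complex.normSq z + 1) * (Complex.normSq z ^ nn - 1) := by
  set r := ‖z‖ with hrdef
  have hr0 : 0 < r := lt_trans zero_lt_one hz
  have hPr : Complex.normSq z = r ^ 2 := (Complex.sq_norm z).symm
  have hP : 1 < Complex.normSq z := by rw [hPr]; nlinarith
  -- bound on sigma
  have habs : ‖sigC z ((starRingEnd ℂ) z) nn‖ ≤ (nn : ℝ) * r ^ (nn - 1) := by
    unfold sigC
    refine le_trans (norm_sum_le _ _) ?_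
    have e : ∀ k ∈ range nn, ‖z ^ k * ((starRingEnd ℂ) z) ^ (nn - 1 - k)‖ = r ^ (nn - 1) := by
      intro k hk
      have hk' : k < nn := mem_range.mp hk
      rw [norm_mul, norm_pow, norm_pow,
        Complex.norm_conj, ← pow_add]
      congr 1; omega
    rw [Finset.sum_congr rfl e, Finset.sum_const, card_range]
    simp
  have hσ : |(sigC z ((starRingEnd ℂ) z) nn).re| ≤ (nn : ℝ) * r ^ (nn - 1) :=
    le_trans (Complex.abs_re_le_norm _) habs
  have halt : 2 * z.re < Complex.normSq z + 1 := by
    have h1 : 2 * z.re ≤ 2 * r := by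
      have := Complex.re_le_norm z; linarith
    have h2 : 2 * r < r ^ 2 + 1 := by nlinarith
    rw [hPr]; linarith
  have hgeo : (Complex.normSq z - 1) * ((nn:ℝ) * r ^ (nn - 1)) ≤ Complex.normSq z ^ nn - 1 := by
    have h5 := sum_pow_ge r hr0 nn
    have h6 : (∑ k ∈ range nn, (r^2) ^ k) * (r^2 - 1) = (r^2) ^ nn - 1 := geom_sum_mul _ nn
    rw [hPr]
    nlinarith [h5, h6]
  have hpos : 0 < (nn : ℝ) * r ^ (nn - 1) := by positivity
  calc 2 * z.re * (Complex.normSq z - 1) * (sigC z ((starRingEnd ℂ) z) nn).re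
      ≤ 2 * z.re * (Complex.normSq z - 1) * ((nn:ℝ) * r ^ (nn - 1)) := by
        have hfac : 0 ≤ 2 * z.re * (Complex.normSq z - 1) := by nlinarith
        nlinarith [abs_le.mp hσ, hfac]
    _ < (Complex.normSq z + 1) * ((Complex.normSq z - 1) * ((nn:ℝ) * r ^ (nn - 1))) := by
        have h7 : 0 < (Complex.normSq z - 1) * ((nn:ℝ) * r ^ (nn - 1)) := by
          apply mul_pos (by linarith) hpos
        nlinarith [h7, halt]
    _ ≤ (Complex.normSq z + 1) * (Complex.normSq z ^ nn - 1) := by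
        apply mul_le_mul_of_nonneg_left hgeo (by linarith)

lemma den_ne (x : ℂ) (hx : 1 < ‖x‖) (k : ℕ) : x ^ k + 1 ≠ 0 := by
  rcases Nat.eq_zero_or_pos k with h | h
  · subst h; norm_num
  · intro hcon
    have h1 : x ^ k = -1 := by linear_combination hcon
    have h2 : ‖x ^ k‖ = 1 := by rw [h1]; simp
    rw [norm_pow] at h2
    have : 1 < ‖x‖ ^ k := one_lt_pow₀ hx (by omega)
    linarith

lemma root_E (d m : ℕ) (n : ℕ → ℕ) (z : ℂ) (hz : 1 < ‖z‖)
    (hroot : aeval z ((X^2 - C ((d : ℝ) - 1) * X - 1) * ∏ i ∈ Finset.Icc 2 m, (X^(n i) + 1)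
        + X * ∑ i ∈ Finset.Icc 2 m, ∏ j ∈ (Finset.Icc 2 m).erase i, (X^(n j) + 1)) = 0) :
    z - 1/z - ((d:ℂ) - 1) + ∑ i ∈ Finset.Icc 2 m, 1/(z^(n i) + 1) = 0 := by
  have hz0 : z ≠ 0 := by
    intro h; rw [h] at hz; simp at hz; linarith
  have hden := den_ne z hz
  simp only [map_add, map_mul, map_sub, map_one, map_pow, aeval_X, aeval_C, map_prod,
    map_sum] at hroot
  rw [show (algebraMap ℝ ℂ) ((d:ℕ):ℝ) = (d:ℂ) by simp] at hroot
  set PP : ℂ := ∏ i ∈ Finset.Icc 2 m, (z^(n i) + 1) with hPPdef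
  have hPP0 : PP ≠ 0 := Finset.prod_ne_zero_iff.mpr (fun i _ => hden (n i))
  have key : (z - 1/z - ((d:ℂ) - 1) + ∑ i ∈ Finset.Icc 2 m, 1/(z^(n i) + 1)) * (z * PP)
      = (z^2 - ((d:ℂ)-1) * z - 1) * PP
        + z * ∑ i ∈ Finset.Icc 2 m, ∏ j ∈ (Finset.Icc 2 m).erase i, (z^(n j) + 1) := by
    rw [add_mul]
    have e1 : (z - 1/z - ((d:ℂ) - 1)) * (z * PP) = (z^2 - ((d:ℂ)-1) * z - 1) * PP := by
      field_simp
      ring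
    have e2 : (∑ i ∈ Finset.Icc 2 m, 1/(z^(n i) + 1)) * (z * PP)
        = z * ∑ i ∈ Finset.Icc 2 m, ∏ j ∈ (Finset.Icc 2 m).erase i, (z^(n j) + 1) := by
      rw [Finset.sum_mul, Finset.mul_sum]
      apply Finset.sum_congr rfl
      intro i hi
      have hsplit : PP = (z^(n i) + 1) * ∏ j ∈ (Finset.Icc 2 m).erase i, (z^(n j) + 1) :=
        (Finset.mul_prod_erase _ _ hi).symm
      rw [hsplit, one_div, mul_left_comm, inv_mul_cancel_left₀ (hden (n i))]
    rw [e1, e2]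
  have hmul : (z - 1/z - ((d:ℂ) - 1) + ∑ i ∈ Finset.Icc 2 m, 1/(z^(n i) + 1)) * (z * PP) = 0 := by
    rw [key]
    linear_combination hroot
  rcases mul_eq_zero.mp hmul with h | h
  · exact h
  · exact absurd h (mul_ne_zero hz0 hPP0)

lemma sig_mul (x y : ℂ) (nn : ℕ) : sigC x y nn * (x - y) = x ^ nn - y ^ nn :=
  geom_sum₂_mul x y nn

lemma pair_eqs (d m : ℕ) (n : ℕ → ℕ) (x y : ℂ) (hx0 : x ≠ 0) (hy0 : y ≠ 0)
    (hdx : ∀ k, x ^ k + 1 ≠ 0) (hdy : ∀ k, y ^ k + 1 ≠ 0) (hxy : x ≠ y)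
    (Ex : x - 1/x - ((d:ℂ) - 1) + ∑ i ∈ Finset.Icc 2 m, 1/(x^(n i) + 1) = 0)
    (Ey : y - 1/y - ((d:ℂ) - 1) + ∑ i ∈ Finset.Icc 2 m, 1/(y^(n i) + 1) = 0) :
    (∑ i ∈ Finset.Icc 2 m, ((x*y)^(n i) - 1)/((x^(n i) + 1)*(y^(n i) + 1))
      = (x + y) * (1 - 1/(x*y)) - (2*((d:ℂ) - 1) - ((Finset.Icc 2 m).card : ℂ)))
    ∧ (∑ i ∈ Finset.Icc 2 m, (sigC x y (n i))/((x^(n i) + 1)*(y^(n i) + 1)) = 1 + 1/(x*y)) := by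
  have hx1 : ∑ i ∈ Finset.Icc 2 m, 1/(x^(n i) + 1) = ((d:ℂ) - 1) + 1/x - x := by
    linear_combination Ex
  have hy1 : ∑ i ∈ Finset.Icc 2 m, 1/(y^(n i) + 1) = ((d:ℂ) - 1) + 1/y - y := by
    linear_combination Ey
  constructor
  · have step1 : ∀ i ∈ Finset.Icc 2 m,
        ((x*y)^(n i) - 1)/((x^(n i) + 1)*(y^(n i) + 1))
          = 1 - (1/(x^(n i) + 1) + 1/(y^(n i) + 1)) := by
      intro i _
      have h1 := hdx (n i); have h2 := hdy (n i)
      field_simp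
      ring
    rw [Finset.sum_congr rfl step1, Finset.sum_sub_distrib, Finset.sum_add_distrib,
      Finset.sum_const, hx1, hy1]
    field_simp
    ring
  · have step2 : ∀ i ∈ Finset.Icc 2 m,
        1/(x^(n i) + 1) - 1/(y^(n i) + 1)
          = -((x - y) * ((sigC x y (n i))/((x^(n i) + 1)*(y^(n i) + 1)))) := by
      intro i _
      have hgs := sig_mul x y (n i)
      rw [div_sub_div _ _ (hdx (n i)) (hdy (n i)), one_mul, mul_one]
      rw [show y ^ n i + 1 - (x ^ n i + 1) = -(sigC x y (n i) * (x - y)) by linear_combination hgs]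
      rw [neg_div, mul_div_assoc]
      ring
    have hsub : ∑ i ∈ Finset.Icc 2 m, (1/(x^(n i) + 1) - 1/(y^(n i) + 1))
        = -((x - y) * ∑ i ∈ Finset.Icc 2 m, (sigC x y (n i))/((x^(n i) + 1)*(y^(n i) + 1))) := by
      rw [Finset.sum_congr rfl step2, Finset.mul_sum, ← Finset.sum_neg_distrib]
    have hsub2 : ∑ i ∈ Finset.Icc 2 m, (1/(x^(n i) + 1) - 1/(y^(n i) + 1))
        = -((x - y) * (1 + 1/(x*y))) := by
      rw [Finset.sum_sub_distrib, hx1, hy1]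
      field_simp
      ring
    have hne : x - y ≠ 0 := sub_ne_zero.mpr hxy
    have := hsub.symm.trans hsub2
    have h2 : (x - y) * ∑ i ∈ Finset.Icc 2 m, (sigC x y (n i))/((x^(n i) + 1)*(y^(n i) + 1))
        = (x - y) * (1 + 1/(x*y)) := by linear_combination -this
    exact mul_left_cancel₀ hne h2

lemma no_nonreal (d m : ℕ) (hd : 1 ≤ d) (hm1 : 1 ≤ m) (hm2 : m ≤ 2*d - 1) (n : ℕ → ℕ)
    (z : ℂ) (hz : 1 < ‖z‖)
    (Ez : z - 1/z - ((d:ℂ) - 1) + ∑ i ∈ Finset.Icc 2 m, 1/(z^(n i) + 1) = 0)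
    (Ezc : (starRingEnd ℂ) z - 1/((starRingEnd ℂ) z) - ((d:ℂ) - 1)
      + ∑ i ∈ Finset.Icc 2 m, 1/(((starRingEnd ℂ) z)^(n i) + 1) = 0) :
    z.im = 0 := by
  by_contra him
  have hz0 : z ≠ 0 := by
    intro h; rw [h] at hz; simp at hz; linarith
  have hzc0 : (starRingEnd ℂ) z ≠ 0 := by simpa using hz0
  have hzc : 1 < ‖(starRingEnd ℂ) z‖ := by rwa [Complex.norm_conj]
  have hxy : z ≠ (starRingEnd ℂ) z := by
    intro h
    exact him (Complex.conj_eq_iff_im.mp h.symm)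
  obtain ⟨C1, C2⟩ := pair_eqs d m n z ((starRingEnd ℂ) z) hz0 hzc0 (den_ne z hz)
    (den_ne _ hzc) hxy Ez Ezc
  -- real data
  set P : ℝ := Complex.normSq z with hPdef
  set a : ℝ := 2 * z.re with hadef
  have hP : 1 < P := by
    have : ‖z‖ ^ 2 = P := Complex.sq_norm z
    nlinarith
  have hδpos : ∀ i : ℕ, 0 < Complex.normSq (z ^ n i + 1) :=
    fun i => Complex.normSq_pos.mpr (den_ne z hz (n i))
  -- conversions
  have hconjpow : ∀ k : ℕ, ((starRingEnd ℂ) z) ^ k + 1 = (starRingEnd ℂ) (z ^ k + 1) := by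
    intro k; simp
  have conv1 : ∀ i ∈ Finset.Icc 2 m,
      ((z * (starRingEnd ℂ) z)^(n i) - 1)/((z^(n i) + 1)*(((starRingEnd ℂ) z)^(n i) + 1))
        = (((P ^ (n i) - 1) / Complex.normSq (z ^ n i + 1) : ℝ) : ℂ) := by
    intro i _
    rw [hconjpow, Complex.mul_conj, Complex.mul_conj]
    push_cast
    ring
  have conv2 : ∀ i ∈ Finset.Icc 2 m,
      (sigC z ((starRingEnd ℂ) z) (n i))/((z^(n i) + 1)*(((starRingEnd ℂ) z)^(n i) + 1))
        = ((((sigC z ((starRingEnd ℂ) z) (n i)).re / Complex.normSq (z ^ n i + 1) : ℝ)) : ℂ) := by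
    intro i _
    set s : ℝ := (sigC z ((starRingEnd ℂ) z) (n i)).re with hs
    have hre : (s : ℂ) = sigC z ((starRingEnd ℂ) z) (n i) := by
      rw [hs]; exact Complex.conj_eq_iff_re.mp (sig_conj_real z (n i))
    rw [hconjpow, Complex.mul_conj, ← hre]
    push_cast
    ring
  have hcard : ((Finset.Icc 2 m).card : ℂ) = (((m : ℝ) - 1 : ℝ) : ℂ) := by
    have h1 : m + 1 - 2 = m - 1 := by omega
    rw [Nat.card_Icc, h1, Nat.cast_sub hm1]
    push_cast
    ring
  have hzzc : z * (starRingEnd ℂ) z = (P : ℂ) := Complex.mul_conj z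
  have hazc : z + (starRingEnd ℂ) z = (a : ℂ) := by
    rw [Complex.add_conj]
  -- real equations
  have R1 : ∑ i ∈ Finset.Icc 2 m, (P ^ (n i) - 1) / Complex.normSq (z ^ n i + 1)
      = a * (1 - 1/P) - (2*((d:ℝ) - 1) - ((m:ℝ) - 1)) := by
    have := C1
    rw [Finset.sum_congr rfl conv1, hcard, hzzc, hazc] at this
    exact_mod_cast this
  have R2 : ∑ i ∈ Finset.Icc 2 m, (sigC z ((starRingEnd ℂ) z) (n i)).re
        / Complex.normSq (z ^ n i + 1) = 1 + 1/P := by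
    have := C2
    rw [Finset.sum_congr rfl conv2, hzzc] at this
    exact_mod_cast this
  -- core
  refine core_false ((d:ℝ) - 1 - ((m:ℝ) - 1)/2) ?_ (Finset.Icc 2 m) n a P
    (fun i => (sigC z ((starRingEnd ℂ) z) (n i)).re)
    (fun i => Complex.normSq (z ^ n i + 1)) hP (fun i _ => hδpos i) ?_ ?_ ?_ ?_
  · have : (m : ℝ) ≤ 2*(d:ℝ) - 1 := by
      have : m + 1 ≤ 2*d := by omega
      have := (Nat.cast_le (α := ℝ)).mpr this
      push_cast at this
      linarith
    linarith
  · intro i _ h0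
    simp [sigC, h0]
  · intro ha i hi hν
    exact keyineq_conj z hz (by rwa [hadef] at ha) (n i) hν
  · rw [R1]; ring
  · exact R2

lemma no_two_real (d m : ℕ) (hd : 1 ≤ d) (hm1 : 1 ≤ m) (hm2 : m ≤ 2*d - 1) (n : ℕ → ℕ)
    (s t : ℝ) (hs : 1 < s) (ht : 1 < t) (hst : s ≠ t)
    (Es : (s:ℂ) - 1/(s:ℂ) - ((d:ℂ) - 1) + ∑ i ∈ Finset.Icc 2 m, 1/((s:ℂ)^(n i) + 1) = 0)
    (Et : (t:ℂ) - 1/(t:ℂ) - ((d:ℂ) - 1) + ∑ i ∈ Finset.Icc 2 m, 1/((t:ℂ)^(n i) + 1) = 0) :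
    False := by
  have hs0 : (s:ℂ) ≠ 0 := by
    simp only [ne_eq, Complex.ofReal_eq_zero]; linarith
  have ht0 : (t:ℂ) ≠ 0 := by
    simp only [ne_eq, Complex.ofReal_eq_zero]; linarith
  have hsabs : 1 < ‖(s:ℂ)‖ := by
    rw [Complex.norm_real, Real.norm_eq_abs]; rw [abs_of_pos (by linarith)]; exact hs
  have htabs : 1 < ‖(t:ℂ)‖ := by
    rw [Complex.norm_real, Real.norm_eq_abs]; rw [abs_of_pos (by linarith)]; exact ht
  have hstC : (s:ℂ) ≠ (t:ℂ) := by
    simp only [ne_eq, Complex.ofReal_inj]; exact hst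
  obtain ⟨C1, C2⟩ := pair_eqs d m n (s:ℂ) (t:ℂ) hs0 ht0 (den_ne _ hsabs) (den_ne _ htabs)
    hstC Es Et
  have hcard : ((Finset.Icc 2 m).card : ℂ) = (((m : ℝ) - 1 : ℝ) : ℂ) := by
    have h1 : m + 1 - 2 = m - 1 := by omega
    rw [Nat.card_Icc, h1, Nat.cast_sub hm1]
    push_cast
    ring
  have sig_cast : ∀ nn : ℕ, sigC (s:ℂ) (t:ℂ) nn
      = ((∑ k ∈ range nn, s ^ k * t ^ (nn - 1 - k) : ℝ) : ℂ) := by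
    intro nn; unfold sigC; push_cast; rfl
  have R1 : ∑ i ∈ Finset.Icc 2 m, ((s*t) ^ (n i) - 1) / ((s^(n i) + 1)*(t^(n i) + 1))
      = (s + t) * (1 - 1/(s*t)) - (2*((d:ℝ) - 1) - ((m:ℝ) - 1)) := by
    rw [hcard] at C1
    exact_mod_cast C1
  have R2 : ∑ i ∈ Finset.Icc 2 m, (∑ k ∈ range (n i), s ^ k * t ^ (n i - 1 - k))
        / ((s^(n i) + 1)*(t^(n i) + 1)) = 1 + 1/(s*t) := by
    rw [Finset.sum_congr rfl (fun i _ => by rw [sig_cast (n i)])] at C2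
    exact_mod_cast C2
  refine core_false ((d:ℝ) - 1 - ((m:ℝ) - 1)/2) ?_ (Finset.Icc 2 m) n (s + t) (s * t)
    (fun i => ∑ k ∈ range (n i), s ^ k * t ^ (n i - 1 - k))
    (fun i => (s^(n i) + 1)*(t^(n i) + 1)) (by nlinarith) ?_ ?_ ?_ ?_ ?_
  · have h2 : (m:ℝ) + 1 ≤ 2*(d:ℝ) := by exact_mod_cast (by omega : m + 1 ≤ 2*d)
    linarith
  · intro i _
    have h3 : (0:ℝ) < s^(n i) := by positivity
    have h4 : (0:ℝ) < t^(n i) := by positivity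
    show (0:ℝ) < (s^(n i) + 1)*(t^(n i) + 1)
    nlinarith
  · intro i _ h0
    simp [h0]
  · intro _ i _ hν
    exact keyineq_real s t hs ht (n i) hν
  · rw [R1]; ring
  · exact R2

lemma not_lt_neg_one (d m : ℕ) (hd : 1 ≤ d) (hm1 : 1 ≤ m) (hm2 : m ≤ 2*d - 1) (n : ℕ → ℕ)
    (t : ℝ) (ht : t < -1)
    (Et : (t:ℂ) - 1/(t:ℂ) - ((d:ℂ) - 1) + ∑ i ∈ Finset.Icc 2 m, 1/((t:ℂ)^(n i) + 1) = 0) :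
    False := by
  have hR : t - 1/t - ((d:ℝ) - 1) + ∑ i ∈ Finset.Icc 2 m, 1/(t^(n i) + 1) = 0 := by
    exact_mod_cast Et
  have habs : 1 < |t| := by rw [abs_of_neg (by linarith)]; linarith
  have hbound : ∀ i ∈ Finset.Icc 2 m, 1/(t^(n i) + 1) ≤ 1/2 := by
    intro i _
    rcases lt_trichotomy (t^(n i) + 1) 0 with h | h | h
    · have : 1/(t^(n i) + 1) < 0 := by
        apply div_neg_of_pos_of_neg one_pos h
      linarith
    · exfalso
      rcases Nat.eq_zero_or_pos (n i) with h0 | h0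
      · rw [h0] at h; norm_num at h
      · have h1 : |t ^ n i| = |t| ^ n i := abs_pow t (n i)
        have h2 : 1 < |t| ^ n i := one_lt_pow₀ habs (by omega)
        have h3 : t ^ n i = -1 := by linarith
        rw [h3] at h1
        norm_num at h1
        linarith
    · have h4 : t ^ n i ≥ 1 := by
        rcases Nat.eq_zero_or_pos (n i) with h0 | h0
        · rw [h0]; norm_num
        · have h1 : |t ^ n i| = |t| ^ n i := abs_pow t (n i)
          have h2 : 1 < |t| ^ n i := one_lt_pow₀ habs (by omega)
          rcases abs_cases (t ^ n i) with ⟨he, _⟩ | ⟨he, _⟩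
          · linarith [he ▸ (h1 ▸ h2)]
          · nlinarith [h1 ▸ h2, he]
      have h5 : (2:ℝ) ≤ t ^ n i + 1 := by linarith
      have h6 := one_div_le_one_div_of_le (by norm_num : (0:ℝ) < 2) h5
      linarith
  have hsum : ∑ i ∈ Finset.Icc 2 m, 1/(t^(n i) + 1) ≤ ((m:ℝ) - 1) * (1/2) := by
    have := Finset.sum_le_card_nsmul (Finset.Icc 2 m) _ (1/2) hbound
    have hcard : ((Finset.Icc 2 m).card : ℝ) = (m:ℝ) - 1 := by
      have h1 : m + 1 - 2 = m - 1 := by omega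
      rw [Nat.card_Icc, h1, Nat.cast_sub hm1]
      push_cast; ring
    rw [nsmul_eq_mul, hcard] at this
    linarith
  have hmd : (m:ℝ) - 1 ≤ 2*((d:ℝ) - 1) := by
    have h2 : (m:ℝ) + 1 ≤ 2*(d:ℝ) := by exact_mod_cast (by omega : m + 1 ≤ 2*d)
    linarith
  have htinv : -1 < 1/t := by
    have ht0 : t < 0 := by linarith
    rw [show (1:ℝ)/t = t⁻¹ by rw [one_div]]
    have h1 : t * t⁻¹ = 1 := mul_inv_cancel₀ (by linarith)
    nlinarith
  linarith


/-- For `d ≥ 1`, `1 ≤ m ≤ 2d−1` and any tuple `n̲ = (n₂,…,n_m)`, the polynomial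
`p_{d,n̲}(X) = (X² − (d−1)X − 1)·∏_{i=2}^{m}(X^{n_i}+1) + X·∑_{i=2}^{m}∏_{j≠i}(X^{n_j}+1)`
has at most one complex root of modulus strictly larger than `1`, and such a root
is real. -/
theorem stmt16 (d m : ℕ) (hd : 1 ≤ d) (hm1 : 1 ≤ m) (hm2 : m ≤ 2*d - 1)
    (n : ℕ → ℕ) :
    (∀ z w : ℂ,
      aeval z ((X^2 - C ((d : ℝ) - 1) * X - 1) * ∏ i ∈ Finset.Icc 2 m, (X^(n i) + 1)
        + X * ∑ i ∈ Finset.Icc 2 m, ∏ j ∈ (Finset.Icc 2 m).erase i, (X^(n j) + 1)) = 0 →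
      aeval w ((X^2 - C ((d : ℝ) - 1) * X - 1) * ∏ i ∈ Finset.Icc 2 m, (X^(n i) + 1)
        + X * ∑ i ∈ Finset.Icc 2 m, ∏ j ∈ (Finset.Icc 2 m).erase i, (X^(n j) + 1)) = 0 →
      1 < ‖z‖ → 1 < ‖w‖ → z = w) ∧
    (∀ z : ℂ,
      aeval z ((X^2 - C ((d : ℝ) - 1) * X - 1) * ∏ i ∈ Finset.Icc 2 m, (X^(n i) + 1)
        + X * ∑ i ∈ Finset.Icc 2 m, ∏ j ∈ (Finset.Icc 2 m).erase i, (X^(n j) + 1)) = 0 →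
      1 < ‖z‖ → z.im = 0) := by
  set p : Polynomial ℝ := (X^2 - C ((d : ℝ) - 1) * X - 1) * ∏ i ∈ Finset.Icc 2 m, (X^(n i) + 1)
        + X * ∑ i ∈ Finset.Icc 2 m, ∏ j ∈ (Finset.Icc 2 m).erase i, (X^(n j) + 1) with hp
  have real_root : ∀ z : ℂ, aeval z p = 0 → 1 < ‖z‖ → z.im = 0 := by
    intro z hroot hz
    have Ez := root_E d m n z hz hroot
    have hrootc : aeval ((starRingEnd ℂ) z) p = 0 := by
      rw [Polynomial.aeval_conj, hroot, map_zero]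
    have hzc : 1 < ‖(starRingEnd ℂ) z‖ := by rwa [Complex.norm_conj]
    have Ezc := root_E d m n ((starRingEnd ℂ) z) hzc hrootc
    exact no_nonreal d m hd hm1 hm2 n z hz Ez Ezc
  constructor
  · intro z w hzr hwr hz hw
    have hzim := real_root z hzr hz
    have hwim := real_root w hwr hw
    have hzeq : z = ((z.re : ℝ) : ℂ) := Complex.ext rfl (by simp [hzim])
    have hweq : w = ((w.re : ℝ) : ℂ) := Complex.ext rfl (by simp [hwim])
    have hzabs : 1 < |z.re| := by rwa [hzeq, Complex.norm_real, Real.norm_eq_abs] at hz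
    have hwabs : 1 < |w.re| := by rwa [hweq, Complex.norm_real, Real.norm_eq_abs] at hw
    have Ez := root_E d m n z hz hzr
    have Ew := root_E d m n w hw hwr
    rw [hzeq] at Ez
    rw [hweq] at Ew
    have hz1 : 1 < z.re := by
      rcases lt_abs.mp hzabs with h | h
      · exact h
      · exact absurd Ez (fun hE => not_lt_neg_one d m hd hm1 hm2 n z.re (by linarith) hE)
    have hw1 : 1 < w.re := by
      rcases lt_abs.mp hwabs with h | h
      · exact h
      · exact absurd Ew (fun hE => not_lt_neg_one d m hd hm1 hm2 n w.re (by linarith) hE)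
    by_cases heq : z.re = w.re
    · exact Complex.ext heq (by rw [hzim, hwim])
    · exact absurd (no_two_real d m hd hm1 hm2 n z.re w.re hz1 hw1 heq Ez Ew) (fun h => h)
  · exact real_root
end

section
/- Let (Λ_m)_{m≥1} be subsets of ℝ constructed as follows: Λ₁ is a singleton; for each m ≥ 2, Λ_m is a union over the elements x of Λ_{m−1} (together with associated auxiliary points) of strictly increasing sequences contained in pairwise disjoint open intervals, each sequence converging to its corresponding point of Λ_{m−1} from below. Then each Λ_m is well ordered under the order inherited from ℝ and has order type ω^{m−1}, and the closure of Λ_m equals the disjoint union Λ₁ ⊔ ⋯ ⊔ Λ_m. -/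
open Set Filter Ordinal

/-- Closure of the range of a strictly increasing sequence converging to `x`
with all values `< x`. -/
private lemma aux_closure_range {f : ℕ → ℝ} {x : ℝ} (hmono : StrictMono f)
    (hlt : ∀ k, f k < x) (htend : Tendsto f atTop (nhds x)) :
    closure (Set.range f) = Set.range f ∪ {x} := by
  apply Set.Subset.antisymm
  · intro w hw
    have hwle : w ≤ x := by
      have : closure (Set.range f) ⊆ Set.Iic x :=
        closure_minimal (by rintro _ ⟨k, rfl⟩; exact (hlt k).le) isClosed_Iic
      exact this hw
    rcases eq_or_lt_of_le hwle with rfl | hwlt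
    · exact Or.inr rfl
    · left
      obtain ⟨N, hN⟩ : ∃ N, w < f N := (htend.eventually (eventually_gt_nhds hwlt)).exists
      have h1 : w ∈ closure (Set.Iio (f N) ∩ Set.range f) :=
        isOpen_Iio.inter_closure ⟨hN, hw⟩
      have h2 : Set.Iio (f N) ∩ Set.range f ⊆ f '' (Set.Iio N) := by
        rintro _ ⟨hlt', k, rfl⟩
        exact ⟨k, hmono.lt_iff_lt.mp hlt', rfl⟩
      have hfin : (f '' (Set.Iio N)).Finite := (Set.finite_Iio N).image f
      have h3 : w ∈ f '' (Set.Iio N) := hfin.isClosed.closure_subset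
        ((closure_mono h2) h1)
      obtain ⟨k, _, rfl⟩ := h3
      exact ⟨k, rfl⟩
  · apply Set.union_subset subset_closure
    rintro _ rfl
    exact mem_closure_of_tendsto htend (Eventually.of_forall fun k => ⟨k, rfl⟩)

/-- Let `Λ₁ ⊂ ℝ` be a singleton, and for each `m ≥ 2` let `Λ_m` be the union, over
the points `x ∈ Λ_{m−1}` (each with an associated auxiliary left endpoint `lo x`),
of strictly increasing sequences contained in pairwise disjoint open intervals
`(lo x, x)`, each sequence converging to its point `x` from below. Then each `Λ_m`
(`m ≥ 1`) is well ordered under the order of `ℝ` with order type `ω^{m−1}`, and the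
closure of `Λ_m` is the disjoint union `Λ₁ ⊔ ⋯ ⊔ Λ_m`. -/
theorem stmt18 (Λ : ℕ → Set ℝ)
    (seq : ℕ → ℝ → ℕ → ℝ) (lo : ℕ → ℝ → ℝ)
    (h1 : ∃ x₀ : ℝ, Λ 1 = {x₀})
    (hstep : ∀ m : ℕ, 2 ≤ m →
      (∀ x ∈ Λ (m - 1),
        lo m x < x ∧
        StrictMono (seq m x) ∧
        (∀ k : ℕ, seq m x k ∈ Set.Ioo (lo m x) x) ∧
        Filter.Tendsto (seq m x) Filter.atTop (nhds x)) ∧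
      (∀ x ∈ Λ (m - 1), ∀ y ∈ Λ (m - 1), x ≠ y →
        Disjoint (Set.Ioo (lo m x) x) (Set.Ioo (lo m y) y)) ∧
      Λ m = ⋃ x ∈ Λ (m - 1), Set.range (seq m x)) :
    ∀ m : ℕ, 1 ≤ m →
      (∃ h : IsWellOrder (↥(Λ m)) (· < ·),
        @Ordinal.type (↥(Λ m)) (· < ·) h = Ordinal.omega0 ^ (m - 1 : ℕ)) ∧
      closure (Λ m) = ⋃ i ∈ Set.Icc 1 m, Λ i ∧
      (Set.Icc 1 m : Set ℕ).PairwiseDisjoint Λ := by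
  obtain ⟨x₀, hx₀⟩ := h1
  intro m hm
  induction m, hm using Nat.le_induction with
  | base =>
    have hU : Unique ↥(Λ 1) := by rw [hx₀]; exact Set.uniqueSingleton x₀
    haveI := hU
    haveI : WellFoundedLT ↥(Λ 1) := Finite.to_wellFoundedLT
    refine ⟨⟨isWellOrder_lt, ?_⟩, ?_, ?_⟩
    · simp only [Nat.sub_self, pow_zero]
      exact Ordinal.type_eq_one_of_unique _
    · rw [hx₀, closure_singleton]
      simp [Set.Icc_self, hx₀]
    · simp only [Set.Icc_self]
      exact Set.pairwiseDisjoint_singleton 1 Λ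
  | succ m hm ih =>
    obtain ⟨⟨inst, htype⟩, hclos, hdisj⟩ := ih
    obtain ⟨hpt, hsep, hΛ⟩ := hstep (m + 1) (by omega)
    simp only [Nat.add_sub_cancel] at hpt hsep hΛ
    -- Key separation fact
    have hA : ∀ x ∈ Λ m, ∀ y ∈ Λ m, x < y → x ≤ lo (m + 1) y := by
      intro x hx y hy hxy
      by_contra hcon
      push_neg at hcon
      obtain ⟨t, ht1, ht2⟩ := exists_between
        (show max (lo (m + 1) x) (lo (m + 1) y) < x from max_lt (hpt x hx).1 hcon)
      exact Set.disjoint_left.mp (hsep x hx y hy hxy.ne)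
        ⟨(le_max_left _ _).trans_lt ht1, ht2⟩
        ⟨(le_max_right _ _).trans_lt ht1, ht2.trans hxy⟩
    have hB : ∀ x ∈ Λ m, ∀ z ∈ Set.Ioo (lo (m + 1) x) x, z ∉ Λ m := by
      intro x hx z hz hzΛ
      rcases eq_or_ne z x with rfl | hne
      · exact absurd hz.2 (lt_irrefl z)
      · exact absurd hz.1 (not_lt.mpr (hA z hzΛ x hx (lt_of_le_of_ne hz.2.le hne)))
    have hC : ∀ x ∈ Λ m, ∀ z ∈ Set.Ioo (lo (m + 1) x) x, z ∉ closure (Λ m) := by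
      intro x hx z hz hcl
      obtain ⟨y, hyI, hyΛ⟩ := mem_closure_iff.mp hcl _ isOpen_Ioo hz
      exact hB x hx y hyI hyΛ
    have hmem : ∀ x ∈ Λ m, ∀ k : ℕ, seq (m + 1) x k ∈ Λ (m + 1) := by
      intro x hx k
      rw [hΛ]
      exact Set.mem_biUnion hx ⟨k, rfl⟩
    have hrep : ∀ p ∈ Λ (m + 1), ∃ x ∈ Λ m, ∃ k, seq (m + 1) x k = p := by
      intro p hp
      rw [hΛ] at hp
      simpa [Set.mem_iUnion] using hp
    have hIcc : Set.Icc 1 (m + 1) = insert (m + 1) (Set.Icc 1 m) := by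
      ext i; simp only [Set.mem_Icc, Set.mem_insert_iff]; omega
    -- Part (a): order type
    have hwf : WellFoundedLT ↥(Λ m) := ⟨inst.wf⟩
    haveI := inst; haveI := hwf
    haveI hwoLex : IsWellOrder (↥(Λ m) ×ₗ ℕ) (· < ·) := isWellOrder_lt
    have gmem : ∀ p : ↥(Λ m) ×ₗ ℕ,
        seq (m + 1) ((ofLex p).1 : ℝ) ((ofLex p).2) ∈ Λ (m + 1) := fun p =>
      hmem _ (ofLex p).1.2 _
    let g : (↥(Λ m) ×ₗ ℕ) → ↥(Λ (m + 1)) := fun p => ⟨_, gmem p⟩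
    have hg_mono : StrictMono g := by
      intro a b hab
      rcases Prod.Lex.lt_iff.mp hab with hlt | ⟨heq, hlt⟩
      · have hx := (ofLex a).1.2
        have hy := (ofLex b).1.2
        have h1 : (seq (m + 1) ((ofLex a).1 : ℝ) ((ofLex a).2) : ℝ)
            < ((ofLex a).1 : ℝ) := ((hpt _ hx).2.2.1 _).2
        have h2 : ((ofLex a).1 : ℝ) ≤ lo (m + 1) ((ofLex b).1 : ℝ) :=
          hA _ hx _ hy hlt
        have h3 : lo (m + 1) ((ofLex b).1 : ℝ)
            < seq (m + 1) ((ofLex b).1 : ℝ) ((ofLex b).2) := ((hpt _ hy).2.2.1 _).1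
        exact Subtype.mk_lt_mk.mpr (by linarith)
      · have hx := (ofLex a).1.2
        have heq' : ((ofLex a).1 : ℝ) = ((ofLex b).1 : ℝ) := congrArg Subtype.val heq
        refine Subtype.mk_lt_mk.mpr ?_
        show seq (m + 1) ((ofLex a).1 : ℝ) ((ofLex a).2)
            < seq (m + 1) ((ofLex b).1 : ℝ) ((ofLex b).2)
        rw [heq']
        exact (hpt _ (heq' ▸ hx)).2.1 hlt
    have hg_surj : Function.Surjective g := by
      rintro ⟨p, hp⟩
      obtain ⟨x, hx, k, hk⟩ := hrep p hp
      exact ⟨toLex (⟨x, hx⟩, k), Subtype.ext hk⟩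
    let e := StrictMono.orderIsoOfSurjective g hg_mono hg_surj
    haveI hwo2 : IsWellOrder ↥(Λ (m + 1)) (· < ·) :=
      RelEmbedding.isWellOrder e.symm.toRelIsoLT.toRelEmbedding
    constructor
    · refine ⟨hwo2, ?_⟩
      have h1 : @Ordinal.type ↥(Λ (m + 1)) (· < ·) hwo2
          = @Ordinal.type (↥(Λ m) ×ₗ ℕ) (· < ·) hwoLex :=
        Ordinal.type_eq.mpr ⟨e.symm.toRelIsoLT⟩
      have h2 : @Ordinal.type (↥(Λ m) ×ₗ ℕ) (· < ·) hwoLex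
          = Ordinal.type ((· < ·) : ℕ → ℕ → Prop)
              * @Ordinal.type ↥(Λ m) (· < ·) inst :=
        Ordinal.type_prod_lex _ _
      rw [h1, h2, Ordinal.type_nat_lt, htype]
      obtain ⟨n, rfl⟩ : ∃ n, m = n + 1 := ⟨m - 1, (Nat.succ_pred_eq_of_pos hm).symm⟩
      simp only [Nat.add_sub_cancel]
      exact (pow_succ' _ _).symm
    constructor
    -- Part (b): closure
    · have hsubcl : Λ m ⊆ closure (Λ (m + 1)) := by
        intro x hx
        exact mem_closure_of_tendsto (hpt x hx).2.2.2
          (Eventually.of_forall fun k => hmem x hx k)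
      have key : closure (Λ (m + 1)) = Λ (m + 1) ∪ closure (Λ m) := by
        apply Set.Subset.antisymm
        · intro z hz
          by_cases hzm : z ∈ closure (Λ m)
          · exact Or.inr hzm
          left
          obtain ⟨δ, hδ, hsep'⟩ : ∃ δ > 0, ∀ y ∈ Λ m, y ∉ Set.Ioo (z - δ) (z + δ) := by
            have hne := hzm
            rw [Metric.mem_closure_iff] at hne
            push_neg at hne
            obtain ⟨ε, hε, h⟩ := hne
            refine ⟨ε, hε, fun y hy hyI => absurd (h y hy) (not_le.mpr ?_)⟩
            rw [Real.dist_eq, abs_sub_lt_iff]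
            exact ⟨by linarith [hyI.1, hyI.2], by linarith [hyI.1, hyI.2]⟩
          have hzI : z ∈ Set.Ioo (z - δ) (z + δ) := ⟨by linarith, by linarith⟩
          obtain ⟨p₀, hp₀I, hp₀Λ⟩ := mem_closure_iff.mp hz _ isOpen_Ioo hzI
          obtain ⟨x₁, hx₁Λ, k₀, hk₀⟩ := hrep p₀ hp₀Λ
          have hp₀Int : p₀ ∈ Set.Ioo (lo (m + 1) x₁) x₁ := hk₀ ▸ (hpt x₁ hx₁Λ).2.2.1 k₀
          have hbig : ∀ y ∈ Λ m, ∀ q, q ∈ Set.Ioo (lo (m + 1) y) y →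
              q ∈ Set.Ioo (z - δ) (z + δ) → z + δ ≤ y := by
            intro y hy q hq hqI
            by_contra hcon
            push_neg at hcon
            exact hsep' y hy ⟨by rcases hq with ⟨_, h2'⟩; rcases hqI with ⟨h3', _⟩; linarith,
              hcon⟩
          have hx₁big : z + δ ≤ x₁ := hbig x₁ hx₁Λ p₀ hp₀Int hp₀I
          have huniq : Set.Ioo (z - δ) (z + δ) ∩ Λ (m + 1)
              ⊆ Set.range (seq (m + 1) x₁) := by
            rintro q ⟨hqI, hqΛ⟩
            obtain ⟨y, hyΛ, k, hk⟩ := hrep q hqΛ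
            have hqInt : q ∈ Set.Ioo (lo (m + 1) y) y := hk ▸ (hpt y hyΛ).2.2.1 k
            rcases eq_or_ne y x₁ with rfl | hne
            · exact ⟨k, hk⟩
            · exfalso
              have hybig : z + δ ≤ y := hbig y hyΛ q hqInt hqI
              obtain ⟨t, ht1, ht2⟩ := exists_between
                (show max (lo (m + 1) y) (lo (m + 1) x₁) < z + δ from
                  max_lt (by rcases hqInt with ⟨h1', _⟩; rcases hqI with ⟨_, h2'⟩; linarith)
                    (by rcases hp₀Int with ⟨h1', _⟩; rcases hp₀I with ⟨_, h2'⟩; linarith))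
              exact Set.disjoint_left.mp (hsep y hyΛ x₁ hx₁Λ hne)
                ⟨(le_max_left _ _).trans_lt ht1, lt_of_lt_of_le ht2 hybig⟩
                ⟨(le_max_right _ _).trans_lt ht1, lt_of_lt_of_le ht2 hx₁big⟩
          have hz1 : z ∈ closure (Set.Ioo (z - δ) (z + δ) ∩ Λ (m + 1)) :=
            isOpen_Ioo.inter_closure ⟨hzI, hz⟩
          have hz2 : z ∈ closure (Set.range (seq (m + 1) x₁)) :=
            closure_mono huniq hz1
          rw [aux_closure_range (hpt x₁ hx₁Λ).2.1
            (fun k => ((hpt x₁ hx₁Λ).2.2.1 k).2) (hpt x₁ hx₁Λ).2.2.2] at hz2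
          rcases hz2 with h | h
          · obtain ⟨k, hk⟩ := h
            exact hk ▸ hmem x₁ hx₁Λ k
          · rw [Set.mem_singleton_iff] at h
            exact absurd (h ▸ hx₁big) (by linarith)
        · exact Set.union_subset subset_closure
            (closure_minimal hsubcl isClosed_closure)
      rw [key, hclos, hIcc, Set.biUnion_insert]
    -- Part (c): pairwise disjointness
    · rw [hIcc]
      refine Set.PairwiseDisjoint.insert hdisj ?_
      intro j hj _
      rw [Set.disjoint_left]
      intro p hp hpj
      obtain ⟨x, hx, k, hk⟩ := hrep p hp
      have hpInt : p ∈ Set.Ioo (lo (m + 1) x) x := hk ▸ (hpt x hx).2.2.1 k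
      have hpcl : p ∈ closure (Λ m) := by
        rw [hclos]
        exact Set.mem_biUnion hj hpj
      exact hC x hx p hpInt hpcl
end
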